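/- (Policy Deviation Theorem, finite MDP version) Let π* be α-optimal under reward r in a finite discounted MDP with γ ∈ [0,1), and let π be any policy with π*(a|s) > 0 wherever π(a|s) > 0. Then for all (s,a): Q^{π*}(s,a) − Q^{π}(s,a) = α·Σ_{t≥1} γ^t · E_{(s_t) ∼ trajectory of π starting at (s_0,a_0)=(s,a)}[ D_KL(π(·|s_t) ‖ π*(·|s_t)) ], i.e., the gap between the optimal soft Q-function and the soft Q-function of π equals α times the discounted sum of expected forward KL divergences along π's trajectories. -/

import Mathlib

open Finset

variable {S A : Type*}

/-- A policy: for each state, a probability distribution over actions. -/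
def IsPolicy [Fintype A] (π : S → A → ℝ) : Prop :=
  (∀ s a, 0 ≤ π s a) ∧ ∀ s, ∑ a, π s a = 1

/-- A transition kernel: for each state-action pair, a distribution over next states. -/
def IsKernel [Fintype S] (P : S → A → S → ℝ) : Prop :=
  (∀ s a s', 0 ≤ P s a s') ∧ ∀ s a, ∑ s', P s a s' = 1

/-- Shannon entropy of a finitely supported distribution. -/
noncomputable def entH [Fintype A] (p : A → ℝ) : ℝ := -∑ a, p a * Real.log (p a)

/-- Kullback–Leibler divergence on a finite set. -/
noncomputable def KLdiv [Fintype A] (p q : A → ℝ) : ℝ := ∑ a, p a * Real.log (p a / q a)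

/-- Soft (log-sum-exp) value of a Q-function at a state. -/
noncomputable def softV [Fintype A] (α : ℝ) (Q : S → A → ℝ) (s : S) : ℝ :=
  α * Real.log (∑ a, Real.exp (Q s a / α))

/-- Q satisfies the soft Bellman equation for policy π under reward r. -/
def IsSoftQ [Fintype S] [Fintype A] (P : S → A → S → ℝ) (r : S → A → ℝ) (γ α : ℝ)
    (π : S → A → ℝ) (Q : S → A → ℝ) : Prop :=
  ∀ s a, Q s a = r s a + γ * ∑ s', P s a s' *
    ((∑ a', π s' a' * Q s' a') + α * entH (π s'))

/-- π is the softmax (α-optimal) policy of the soft Q-function Q. -/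
def IsAlphaOptimal [Fintype A] (α : ℝ) (π : S → A → ℝ) (Q : S → A → ℝ) : Prop :=
  ∀ s a, π s a = Real.exp ((Q s a - softV α Q s) / α)

/-- `EKL P π πstar n s a` = expected KL divergence `D_KL(π(·|s_{n+1}) ‖ πstar(·|s_{n+1}))`
at time `n+1` along a π-trajectory started at `(s_0, a_0) = (s, a)`. -/
noncomputable def EKL [Fintype S] [Fintype A] (P : S → A → S → ℝ)
    (π πstar : S → A → ℝ) : ℕ → S → A → ℝ
  | 0 => fun s a => ∑ s', P s a s' * KLdiv (π s') (πstar s')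
  | (n+1) => fun s a => ∑ s', P s a s' * ∑ a', π s' a' * EKL P π πstar n s' a'

/-- Sequential forward KL divergence
`D̄(π‖πstar; s,a) = Σ_{t≥1} γ^t E[D_KL(π(·|s_t)‖πstar(·|s_t))]`. -/
noncomputable def seqKL [Fintype S] [Fintype A] (P : S → A → S → ℝ)
    (π πstar : S → A → ℝ) (γ : ℝ) (s : S) (a : A) : ℝ :=
  ∑' n : ℕ, γ ^ (n + 1) * EKL P π πstar n s a

/-- `stateDist P π n s a x` = probability of being at state `x` at time `n+1` along a
π-trajectory started at `(s_0, a_0) = (s, a)`. -/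
noncomputable def stateDist [Fintype S] [Fintype A] (P : S → A → S → ℝ)
    (π : S → A → ℝ) : ℕ → S → A → S → ℝ
  | 0 => fun s a x => P s a x
  | (n+1) => fun s a x => ∑ s', stateDist P π n s a s' * ∑ a', π s' a' * P s' a' x

/-- Iterated expectation of a function `D` along π-trajectories. -/
noncomputable def Del [Fintype S] [Fintype A] (P : S → A → S → ℝ)
    (π : S → A → ℝ) (D : S → A → ℝ) : ℕ → S → A → ℝ
  | 0 => D
  | (n+1) => fun s a => ∑ s', P s a s' * ∑ a', π s' a' * Del P π D n s' a'

lemma abs_avg_le {ι : Type*} [Fintype ι] (w g : ι → ℝ) (hw : ∀ i, 0 ≤ w i)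
    (hw1 : ∑ i, w i = 1) (M : ℝ) (hg : ∀ i, |g i| ≤ M) : |∑ i, w i * g i| ≤ M := by
  calc |∑ i, w i * g i| ≤ ∑ i, |w i * g i| := Finset.abs_sum_le_sum_abs _ _
    _ = ∑ i, w i * |g i| := by
        refine Finset.sum_congr rfl fun i _ => ?_
        rw [abs_mul, abs_of_nonneg (hw i)]
    _ ≤ ∑ i, w i * M := Finset.sum_le_sum fun i _ => mul_le_mul_of_nonneg_left (hg i) (hw i)
    _ = M := by rw [← Finset.sum_mul, hw1, one_mul]

lemma key_softmax [Fintype A] (α : ℝ) (hα : 0 < α) (Q : S → A → ℝ) (πstar : S → A → ℝ)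
    (hopt : IsAlphaOptimal α πstar Q) (s : S) (p : A → ℝ)
    (hp0 : ∀ a, 0 ≤ p a) (hp1 : ∑ a, p a = 1) :
    (∑ a, p a * Q s a) + α * entH p = softV α Q s - α * KLdiv p (πstar s) := by
  have hKL : KLdiv p (πstar s) = ∑ a,
      (p a * Real.log (p a) - p a * Q s a / α + p a * softV α Q s / α) := by
    unfold KLdiv
    refine Finset.sum_congr rfl fun a _ => ?_
    rcases eq_or_lt_of_le (hp0 a) with h | h
    · simp [← h]
    · rw [hopt s a, Real.log_div (ne_of_gt h) (Real.exp_ne_zero _), Real.log_exp]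
      field_simp
      ring
  have hs1 : ∑ a, p a * softV α Q s / α = softV α Q s / α := by
    rw [← Finset.sum_div, ← Finset.sum_mul, hp1, one_mul]
  have hs2 : ∑ a, p a * Q s a / α = (∑ a, p a * Q s a) / α := by
    rw [← Finset.sum_div]
  rw [hKL, Finset.sum_add_distrib, Finset.sum_sub_distrib, hs1, hs2]
  unfold entH
  field_simp
  ring

lemma KLdiv_self [Fintype A] (q : A → ℝ) (hq : ∀ a, 0 < q a) : KLdiv q q = 0 := by
  unfold KLdiv
  refine Finset.sum_eq_zero fun a _ => ?_
  rw [div_self (ne_of_gt (hq a)), Real.log_one, mul_zero]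

lemma Del_step [Fintype S] [Fintype A] (P : S → A → S → ℝ) (π πstar : S → A → ℝ)
    (D : S → A → ℝ) (γ α : ℝ)
    (hrec : ∀ s a, D s a = γ * ∑ s', P s a s' *
      ((∑ a', π s' a' * D s' a') + α * KLdiv (π s') (πstar s'))) :
    ∀ n s a, Del P π D n s a = α * γ * EKL P π πstar n s a + γ * Del P π D (n+1) s a := by
  intro n
  induction n with
  | zero =>
    intro s a
    show D s a = _
    rw [hrec s a]
    show _ = α * γ * (∑ s', P s a s' * KLdiv (π s') (πstar s'))
      + γ * ∑ s', P s a s' * ∑ a', π s' a' * D s' a'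
    rw [Finset.mul_sum, Finset.mul_sum, Finset.mul_sum, ← Finset.sum_add_distrib]
    refine Finset.sum_congr rfl fun s' _ => by ring
  | succ n ih =>
    intro s a
    show (∑ s', P s a s' * ∑ a', π s' a' * Del P π D n s' a') = _
    have h1 : ∀ s', ∑ a', π s' a' * Del P π D n s' a'
        = α * γ * (∑ a', π s' a' * EKL P π πstar n s' a')
          + γ * ∑ a', π s' a' * Del P π D (n+1) s' a' := by
      intro s'
      rw [Finset.mul_sum, Finset.mul_sum, ← Finset.sum_add_distrib]
      refine Finset.sum_congr rfl fun a' _ => ?_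
      rw [ih s' a']; ring
    show _ = α * γ * (∑ s', P s a s' * ∑ a', π s' a' * EKL P π πstar n s' a')
      + γ * ∑ s', P s a s' * ∑ a', π s' a' * Del P π D (n+1) s' a'
    rw [Finset.mul_sum, Finset.mul_sum, ← Finset.sum_add_distrib]
    refine Finset.sum_congr rfl fun s' _ => ?_
    rw [h1 s']; ring

lemma Del_partial [Fintype S] [Fintype A] (P : S → A → S → ℝ) (π πstar : S → A → ℝ)
    (D : S → A → ℝ) (γ α : ℝ)
    (hrec : ∀ s a, D s a = γ * ∑ s', P s a s' *
      ((∑ a', π s' a' * D s' a') + α * KLdiv (π s') (πstar s'))) :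
    ∀ N s a, D s a = α * ∑ n ∈ Finset.range N, γ ^ (n + 1) * EKL P π πstar n s a
      + γ ^ N * Del P π D N s a := by
  intro N
  induction N with
  | zero => intro s a; simp [Del]
  | succ N ih =>
    intro s a
    rw [ih s a, Finset.sum_range_succ, Del_step P π πstar D γ α hrec N s a]
    ring

lemma Del_bound [Fintype S] [Fintype A] (P : S → A → S → ℝ) (π : S → A → ℝ)
    (hP : IsKernel P) (hπ : IsPolicy π) (D : S → A → ℝ) (M : ℝ)
    (hM : ∀ s a, |D s a| ≤ M) : ∀ n s a, |Del P π D n s a| ≤ M := by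
  intro n
  induction n with
  | zero => exact hM
  | succ n ih =>
    intro s a
    exact abs_avg_le _ _ (hP.1 s a) (hP.2 s a) M fun s' =>
      abs_avg_le _ _ (hπ.1 s') (hπ.2 s') M (ih s')

lemma EKL_bound [Fintype S] [Fintype A] (P : S → A → S → ℝ) (π πstar : S → A → ℝ)
    (hP : IsKernel P) (hπ : IsPolicy π) (C : ℝ)
    (hC : ∀ s', |KLdiv (π s') (πstar s')| ≤ C) :
    ∀ n s a, |EKL P π πstar n s a| ≤ C := by
  intro n
  induction n with
  | zero =>
    intro s a
    exact abs_avg_le _ _ (hP.1 s a) (hP.2 s a) C hC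
  | succ n ih =>
    intro s a
    exact abs_avg_le _ _ (hP.1 s a) (hP.2 s a) C fun s' =>
      abs_avg_le _ _ (hπ.1 s') (hπ.2 s') C (ih s')

theorem stmt6 [Fintype S] [Fintype A] [Nonempty A]
    (P : S → A → S → ℝ) (hP : IsKernel P)
    (r : S → A → ℝ) (γ α : ℝ) (hγ0 : 0 ≤ γ) (hγ1 : γ < 1) (hα : 0 < α)
    (πstar π : S → A → ℝ) (hπstar : IsPolicy πstar) (hπ : IsPolicy π)
    (hsupp : ∀ s a, 0 < π s a → 0 < πstar s a)
    (Qstar : S → A → ℝ) (hQstar : IsSoftQ P r γ α πstar Qstar)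
    (hopt : IsAlphaOptimal α πstar Qstar)
    (Qπ : S → A → ℝ) (hQπ : IsSoftQ P r γ α π Qπ) :
    ∀ s a, Qstar s a - Qπ s a = α * seqKL P π πstar γ s a := by
  have hpos : ∀ s a, 0 < πstar s a := fun s a => by
    rw [hopt s a]; exact Real.exp_pos _
  set D : S → A → ℝ := fun s a => Qstar s a - Qπ s a with hD
  have hrec : ∀ s a, D s a = γ * ∑ s', P s a s' *
      ((∑ a', π s' a' * D s' a') + α * KLdiv (π s') (πstar s')) := by
    intro s a
    have inner : ∀ s', P s a s' * ((∑ a', πstar s' a' * Qstar s' a') + α * entH (πstar s'))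
        - P s a s' * ((∑ a', π s' a' * Qπ s' a') + α * entH (π s'))
        = P s a s' * ((∑ a', π s' a' * D s' a') + α * KLdiv (π s') (πstar s')) := by
      intro s'
      rw [← mul_sub]
      congr 1
      have e1 := key_softmax α hα Qstar πstar hopt s' (πstar s') (hπstar.1 s') (hπstar.2 s')
      have e2 := key_softmax α hα Qstar πstar hopt s' (π s') (hπ.1 s') (hπ.2 s')
      rw [KLdiv_self (πstar s') (hpos s'), mul_zero, sub_zero] at e1
      have e3 : ∑ a', π s' a' * D s' a'
          = (∑ a', π s' a' * Qstar s' a') - ∑ a', π s' a' * Qπ s' a' := by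
        rw [← Finset.sum_sub_distrib]
        exact Finset.sum_congr rfl fun a' _ => by simp [hD]; ring
      rw [e3]
      linarith
    have lhs : D s a = γ * ((∑ s', P s a s' * ((∑ a', πstar s' a' * Qstar s' a') + α * entH (πstar s')))
        - ∑ s', P s a s' * ((∑ a', π s' a' * Qπ s' a') + α * entH (π s'))) := by
      simp only [hD, hQstar s a, hQπ s a]; ring
    rw [lhs, ← Finset.sum_sub_distrib]
    congr 1
    exact Finset.sum_congr rfl fun s' _ => inner s'
  intro s a
  haveI : Nonempty S := ⟨s⟩
  haveI : Nonempty (S × A) := inferInstance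
  set C : ℝ := Finset.univ.sup' Finset.univ_nonempty
    (fun s' => |KLdiv (π s') (πstar s')|) with hCdef
  have hC : ∀ s', |KLdiv (π s') (πstar s')| ≤ C :=
    fun s' => Finset.le_sup' (fun s' => |KLdiv (π s') (πstar s')|) (Finset.mem_univ s')
  have hC0 : 0 ≤ C := le_trans (abs_nonneg _) (hC (Classical.arbitrary S))
  set M : ℝ := Finset.univ.sup' Finset.univ_nonempty
    (fun p : S × A => |D p.1 p.2|) with hMdef
  have hM : ∀ s' a', |D s' a'| ≤ M :=
    fun s' a' => Finset.le_sup' (fun p : S × A => |D p.1 p.2|) (Finset.mem_univ (s', a'))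
  have hEb := EKL_bound P π πstar hP hπ C hC
  have hDb := Del_bound P π hP hπ D M hM
  -- summability
  have hsm : Summable (fun n => γ ^ (n + 1) * EKL P π πstar n s a) := by
    refine Summable.of_norm_bounded
      ((summable_geometric_of_lt_one hγ0 hγ1).mul_left (C * γ)) fun n => ?_
    rw [Real.norm_eq_abs, abs_mul, abs_of_nonneg (pow_nonneg hγ0 _)]
    calc γ ^ (n + 1) * |EKL P π πstar n s a| ≤ γ ^ (n + 1) * C :=
          mul_le_mul_of_nonneg_left (hEb n s a) (pow_nonneg hγ0 _)
      _ = C * γ * γ ^ n := by ring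
  have h1 : Filter.Tendsto (fun N => α * ∑ n ∈ Finset.range N, γ ^ (n + 1) * EKL P π πstar n s a)
      Filter.atTop (nhds (α * ∑' n, γ ^ (n + 1) * EKL P π πstar n s a)) :=
    (hsm.hasSum.tendsto_sum_nat).const_mul α
  have hz : Filter.Tendsto (fun N => γ ^ N * Del P π D N s a) Filter.atTop (nhds 0) := by
    have hg : Filter.Tendsto (fun N => γ ^ N * M) Filter.atTop (nhds 0) := by
      simpa using (tendsto_pow_atTop_nhds_zero_of_lt_one hγ0 hγ1).mul_const M
    refine squeeze_zero_norm (fun N => ?_) hg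
    rw [Real.norm_eq_abs, abs_mul, abs_of_nonneg (pow_nonneg hγ0 _)]
    calc γ ^ N * |Del P π D N s a| ≤ γ ^ N * M :=
          mul_le_mul_of_nonneg_left (hDb N s a) (pow_nonneg hγ0 _)
      _ = γ ^ N * M := rfl
  have h2 : Filter.Tendsto (fun N => α * ∑ n ∈ Finset.range N, γ ^ (n + 1) * EKL P π πstar n s a)
      Filter.atTop (nhds (D s a)) := by
    have he : (fun N => α * ∑ n ∈ Finset.range N, γ ^ (n + 1) * EKL P π πstar n s a)
        = fun N => D s a - γ ^ N * Del P π D N s a := by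
      funext N
      have := Del_partial P π πstar D γ α hrec N s a
      linarith
    rw [he]
    simpa using tendsto_const_nhds.sub hz
  have := tendsto_nhds_unique h1 h2
  unfold seqKL
  simp only [hD] at this ⊢
  linarith
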